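/- Let i, j, k ∈ ℍ be the quaternion imaginary units and consider the system x' = diag(i, j)·x on ℝ, which has solutions x₁(t) = (exp(ti), 0) and x₂(t) = (0, exp(tj)). Then x(t) = (exp(ti)·k, 0) is also a solution of this system on ℝ, yet there do not exist quaternions a, b that are complex numbers (i.e. whose j-components and k-components are zero) such that x(t) = x₁(t)a + x₂(t)b for all t ∈ ℝ. -/

import Mathlib

open Matrix

/-- The quaternion imaginary unit `i`. -/
def qI : Quaternion ℝ := ⟨0, 1, 0, 0⟩
/-- The quaternion imaginary unit `j`. -/
def qJ : Quaternion ℝ := ⟨0, 0, 1, 0⟩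
/-- The quaternion imaginary unit `k`. -/
def qK : Quaternion ℝ := ⟨0, 0, 0, 1⟩

/-- For the system `x' = diag(i, j) x` with solutions `x₁(t) = (exp(t i), 0)` and
`x₂(t) = (0, exp(t j))`, the function `x(t) = (exp(t i) k, 0)` is also a solution, but it
cannot be written as `x₁ a + x₂ b` with complex constants `a, b` (quaternions whose `j`-
and `k`-components vanish). -/
theorem qde_solution_set_over_complex_not_complete :
    (∀ t : ℝ, HasDerivAt (fun s : ℝ => ![NormedSpace.exp (s • qI), 0])
      ((Matrix.diagonal ![qI, qJ]).mulVec ![NormedSpace.exp (t • qI), 0]) t) ∧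
    (∀ t : ℝ, HasDerivAt (fun s : ℝ => ![0, NormedSpace.exp (s • qJ)])
      ((Matrix.diagonal ![qI, qJ]).mulVec ![0, NormedSpace.exp (t • qJ)]) t) ∧
    (∀ t : ℝ, HasDerivAt (fun s : ℝ => ![NormedSpace.exp (s • qI) * qK, 0])
      ((Matrix.diagonal ![qI, qJ]).mulVec ![NormedSpace.exp (t • qI) * qK, 0]) t) ∧
    ¬∃ a b : Quaternion ℝ, (a.imJ = 0 ∧ a.imK = 0 ∧ b.imJ = 0 ∧ b.imK = 0) ∧
      ∀ t : ℝ, (![NormedSpace.exp (t • qI) * qK, 0] : Fin 2 → Quaternion ℝ) =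
        fun i => (![NormedSpace.exp (t • qI), 0] : Fin 2 → Quaternion ℝ) i * a +
          (![0, NormedSpace.exp (t • qJ)] : Fin 2 → Quaternion ℝ) i * b := by

  refine ⟨fun t => ?_, fun t => ?_, fun t => ?_, ?_⟩
  · rw [hasDerivAt_pi]
    intro i
    fin_cases i <;>
      simp [Matrix.mulVec_diagonal]
    · exact hasDerivAt_exp_smul_const' qI t
    · exact hasDerivAt_const t 0
  · rw [hasDerivAt_pi]
    intro i
    fin_cases i <;>
      simp [Matrix.mulVec_diagonal]
    · exact hasDerivAt_const t 0
    · exact hasDerivAt_exp_smul_const' qJ t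
  · rw [hasDerivAt_pi]
    intro i
    fin_cases i <;>
      simp [Matrix.mulVec_diagonal]
    · have := (hasDerivAt_exp_smul_const' qI t).mul_const qK
      simpa [mul_assoc] using this
    · exact hasDerivAt_const t 0
  · rintro ⟨a, b, ⟨haJ, haK, hbJ, hbK⟩, h⟩
    have h0 := congrFun (h 0) 0
    simp at h0
    have : a = qK := by
      simpa using h0.symm
    rw [this] at haK
    simp [qK] at haK
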